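/- Consider single-sample SGD on the one-dimensional quadratic loss: x_{t+1} = (1-η)x_t + η A_t, where (A_t)_{t≥0} are i.i.d. real random variables with mean ā and variance σ² > 0, 0 < η < 2, and x_0 ∈ ℝ deterministic. Let A be an independent copy of A_0. Then lim_{t→∞} E[(x_t - ā)²] = η σ²/(2-η), lim_{t→∞} E[(x_t - A)²] = 2σ²/(2-η), and hence the Gradient–Noise Interaction at stationarity, defined as the ratio (lim_{t→∞} E[(x_t - A)²]) / (lim_{t→∞} E[(x_t - ā)²]), equals exactly 2/η. -/

import Mathlib

open MeasureTheory ProbabilityTheory Filter Topology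

private lemma expand_sq {Ω : Type*} [MeasurableSpace Ω] {μ : Measure Ω} [IsProbabilityMeasure μ]
    (f g : Ω → ℝ) (hind : IndepFun f g μ) (hf : MemLp f 2 μ) (hg : MemLp g 2 μ) :
    ∫ ω, (f ω + g ω) ^ 2 ∂μ
      = (∫ ω, f ω ^ 2 ∂μ) + 2 * ((∫ ω, f ω ∂μ) * (∫ ω, g ω ∂μ)) + ∫ ω, g ω ^ 2 ∂μ := by
  have hfi : Integrable f μ := hf.integrable one_le_two
  have hgi : Integrable g μ := hg.integrable one_le_two
  have hfg : Integrable (f * g) μ := hind.integrable_mul hfi hgi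
  have h1 : ∀ ω, (f ω + g ω) ^ 2 = f ω ^ 2 + (2 * (f ω * g ω) + g ω ^ 2) := by intro ω; ring
  have hfg' : Integrable (fun ω => f ω * g ω) μ := hfg
  have hmul : ∫ ω, f ω * g ω ∂μ = (∫ ω, f ω ∂μ) * ∫ ω, g ω ∂μ := by
    have := hind.integral_mul_eq_mul_integral hfi.aestronglyMeasurable hgi.aestronglyMeasurable
    simpa [Pi.mul_apply] using this
  have e1 : ∫ ω, (2 * (f ω * g ω) + g ω ^ 2) ∂μ
      = 2 * ((∫ ω, f ω ∂μ) * ∫ ω, g ω ∂μ) + ∫ ω, g ω ^ 2 ∂μ := by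
    rw [integral_add (hfg'.const_mul 2) hg.integrable_sq, integral_const_mul, hmul]
  simp_rw [h1]
  have hadd : Integrable (fun ω => 2 * (f ω * g ω) + g ω ^ 2) μ :=
    (hfg'.const_mul 2).add hg.integrable_sq
  rw [integral_add hf.integrable_sq hadd, e1]
  ring

/-- Single-sample SGD on the 1-d quadratic loss with `0 < η < 2`:
the stationary second moment of `x_t - abar` is `η σ² / (2 - η)`, the stationary
per-sample loss-type moment `E[(x_t - A)²]` (with `A` an independent copy of `A_0`)
is `2σ²/(2-η)`, and hence the Gradient–Noise Interaction at stationarity equals `2/η`. -/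
theorem sgd_1d_gni_at_stationarity
    {Ω : Type*} [MeasurableSpace Ω] {μ : Measure Ω} [IsProbabilityMeasure μ]
    (A : ℕ → Ω → ℝ)
    (hmeas : ∀ t, Measurable (A t))
    (hindep : iIndepFun A μ)
    (hident : ∀ s t, Measure.map (A s) μ = Measure.map (A t) μ)
    (hL2 : ∀ t, MemLp (A t) 2 μ)
    (abar σ2 : ℝ)
    (hmean : ∀ t, ∫ ω, A t ω ∂μ = abar)
    (hvar : ∀ t, ∫ ω, (A t ω - abar) ^ 2 ∂μ = σ2)
    (hσ2 : 0 < σ2)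
    (η x₀ : ℝ) (hη0 : 0 < η) (hη2 : η < 2)
    (x : ℕ → Ω → ℝ)
    (hx0 : ∀ ω, x 0 ω = x₀)
    (hstep : ∀ t ω, x (t + 1) ω = (1 - η) * x t ω + η * A t ω)
    -- `Aind` is an independent copy of `A 0`:
    (Aind : Ω → ℝ) (hAmeas : Measurable Aind)
    (hAcopy : Measure.map Aind μ = Measure.map (A 0) μ)
    (hAindep : ∀ t, IndepFun (x t) Aind μ) :
    Tendsto (fun t => ∫ ω, (x t ω - abar) ^ 2 ∂μ) atTop (𝓝 (η * σ2 / (2 - η))) ∧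
    Tendsto (fun t => ∫ ω, (x t ω - Aind ω) ^ 2 ∂μ) atTop (𝓝 (2 * σ2 / (2 - η))) ∧
    (2 * σ2 / (2 - η)) / (η * σ2 / (2 - η)) = 2 / η := by
  have h2η : (2 : ℝ) - η ≠ 0 := by linarith
  -- x t as a measurable function of A 0, ..., A (t-1)
  have hx_fn : ∀ t, ∃ g : ({i // i ∈ Finset.range t} → ℝ) → ℝ,
      Measurable g ∧ ∀ ω, x t ω = g (fun i => A i.1 ω) := by
    intro t
    induction t with
    | zero => exact ⟨fun _ => x₀, measurable_const, fun ω => hx0 ω⟩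
    | succ t ih =>
      obtain ⟨g, hg, hgx⟩ := ih
      refine ⟨fun v => (1 - η) * g (fun i => v ⟨i.1,
            Finset.mem_range.2 (Nat.lt_succ_of_lt (Finset.mem_range.1 i.2))⟩)
          + η * v ⟨t, Finset.mem_range.2 (Nat.lt_succ_self t)⟩, ?_, ?_⟩
      · exact (measurable_const.mul (hg.comp
          (measurable_pi_lambda _ fun i => measurable_pi_apply _))).add
          (measurable_const.mul (measurable_pi_apply _))
      · intro ω
        rw [hstep, hgx]
  have hxmeas : ∀ t, Measurable (x t) := by
    intro t
    obtain ⟨g, hg, hgx⟩ := hx_fn t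
    have : x t = fun ω => g (fun i => A i.1 ω) := funext hgx
    rw [this]
    exact hg.comp (measurable_pi_lambda _ fun i => hmeas _)
  -- independence of x t and A t
  have hindAx : ∀ t, IndepFun (x t) (A t) μ := by
    intro t
    obtain ⟨g, hg, hgx⟩ := hx_fn t
    have hdisj : Disjoint (Finset.range t) ({t} : Finset ℕ) := by
      simp only [Finset.disjoint_left, Finset.mem_range, Finset.mem_singleton]
      omega
    have h := hindep.indepFun_finset (Finset.range t) {t} hdisj hmeas
    have h2 := h.comp hg (measurable_pi_apply (⟨t, Finset.mem_singleton_self t⟩ :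
      ({t} : Finset ℕ)))
    have hx : x t = (g ∘ fun a (i : (Finset.range t : Finset ℕ)) => A (i : ℕ) a) :=
      funext hgx
    have hA : A t = ((fun v : ({t} : Finset ℕ) → ℝ =>
        v ⟨t, Finset.mem_singleton_self t⟩) ∘ fun a (i : ({t} : Finset ℕ)) => A (i : ℕ) a) :=
      funext fun ω => rfl
    rw [hx, hA]
    exact h2
  -- L2 bounds for x t
  have hxL2 : ∀ t, MemLp (x t) 2 μ := by
    intro t
    induction t with
    | zero =>
      have : x 0 = fun _ => x₀ := funext hx0
      rw [this]; exact memLp_const x₀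
    | succ t ih =>
      have : x (t + 1) = fun ω => (1 - η) * x t ω + η * A t ω := funext (hstep t)
      rw [this]
      exact (ih.const_mul _).add ((hL2 t).const_mul _)
  -- facts about Aind
  have hAindL2 : MemLp Aind 2 μ := by
    have h0 : MemLp id 2 (Measure.map (A 0) μ) :=
      (memLp_map_measure_iff aestronglyMeasurable_id (hmeas 0).aemeasurable).2 (hL2 0)
    have h1 : MemLp id 2 (Measure.map Aind μ) := by rw [hAcopy]; exact h0
    exact (memLp_map_measure_iff aestronglyMeasurable_id hAmeas.aemeasurable).1 h1
  have hAindmean : ∫ ω, Aind ω ∂μ = abar := by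
    have h1 : ∫ y, y ∂(Measure.map Aind μ) = ∫ ω, Aind ω ∂μ :=
      integral_map hAmeas.aemeasurable aestronglyMeasurable_id
    have h2 : ∫ y, y ∂(Measure.map (A 0) μ) = ∫ ω, A 0 ω ∂μ :=
      integral_map (hmeas 0).aemeasurable aestronglyMeasurable_id
    rw [← h1, hAcopy, h2, hmean]
  have hAindvar : ∫ ω, (Aind ω - abar) ^ 2 ∂μ = σ2 := by
    have hc : AEStronglyMeasurable (fun y : ℝ => (y - abar) ^ 2) (Measure.map Aind μ) :=
      (continuous_id.sub continuous_const |>.pow 2).aestronglyMeasurable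
    have hc' : AEStronglyMeasurable (fun y : ℝ => (y - abar) ^ 2) (Measure.map (A 0) μ) :=
      (continuous_id.sub continuous_const |>.pow 2).aestronglyMeasurable
    have h1 : ∫ y, (y - abar) ^ 2 ∂(Measure.map Aind μ) = ∫ ω, (Aind ω - abar) ^ 2 ∂μ :=
      integral_map hAmeas.aemeasurable hc
    have h2 : ∫ y, (y - abar) ^ 2 ∂(Measure.map (A 0) μ) = ∫ ω, (A 0 ω - abar) ^ 2 ∂μ :=
      integral_map (hmeas 0).aemeasurable hc'
    rw [← h1, hAcopy, h2, hvar]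
  set e : ℕ → ℝ := fun t => ∫ ω, (x t ω - abar) ^ 2 ∂μ with he
  set L : ℝ := η * σ2 / (2 - η) with hL
  set r : ℝ := (1 - η) ^ 2 with hr
  -- the recurrence for e
  have hrec : ∀ t, e (t + 1) = r * e t + η ^ 2 * σ2 := by
    intro t
    have hfL2 : MemLp (fun ω => (1 - η) * (x t ω - abar)) 2 μ :=
      ((hxL2 t).sub (memLp_const abar)).const_mul _
    have hgL2 : MemLp (fun ω => η * (A t ω - abar)) 2 μ :=
      ((hL2 t).sub (memLp_const abar)).const_mul _
    have hind : IndepFun (fun ω => (1 - η) * (x t ω - abar))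
        (fun ω => η * (A t ω - abar)) μ := by
      have hφ : Measurable (fun y : ℝ => (1 - η) * (y - abar)) :=
        (measurable_id.sub measurable_const).const_mul _
      have hψ : Measurable (fun y : ℝ => η * (y - abar)) :=
        (measurable_id.sub measurable_const).const_mul _
      exact (hindAx t).comp hφ hψ
    have hpt : ∀ ω, (x (t + 1) ω - abar) ^ 2 =
        ((fun ω => (1 - η) * (x t ω - abar)) ω + (fun ω => η * (A t ω - abar)) ω) ^ 2 := by
      intro ω; simp only [hstep t ω]; ring
    have key := expand_sq (μ := μ) (fun ω => (1 - η) * (x t ω - abar))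
      (fun ω => η * (A t ω - abar)) hind hfL2 hgL2
    have hg0 : ∫ ω, η * (A t ω - abar) ∂μ = 0 := by
      rw [integral_const_mul, integral_sub ((hL2 t).integrable one_le_two)
        (integrable_const abar), hmean, integral_const]
      simp
    have hfsq : ∫ ω, ((1 - η) * (x t ω - abar)) ^ 2 ∂μ = r * e t := by
      simp_rw [mul_pow]
      rw [integral_const_mul]
    have hgsq : ∫ ω, (η * (A t ω - abar)) ^ 2 ∂μ = η ^ 2 * σ2 := by
      simp_rw [mul_pow]
      rw [integral_const_mul, hvar]
    calc e (t + 1) = ∫ ω, ((fun ω => (1 - η) * (x t ω - abar)) ω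
          + (fun ω => η * (A t ω - abar)) ω) ^ 2 ∂μ := by
          simp only [he]; exact integral_congr_ae (ae_of_all _ hpt)
      _ = r * e t + η ^ 2 * σ2 := by
          rw [key, hg0, hfsq, hgsq]; ring
  -- closed form
  have hLfix : r * L + η ^ 2 * σ2 = L := by
    rw [hL, hr]; field_simp; ring
  have hclosed : ∀ t, e t = L + r ^ t * (e 0 - L) := by
    intro t
    induction t with
    | zero => simp
    | succ t ih =>
      rw [hrec t, ih]
      have : r * (L + r ^ t * (e 0 - L)) + η ^ 2 * σ2
          = (r * L + η ^ 2 * σ2) + r ^ (t + 1) * (e 0 - L) := by ring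
      rw [this, hLfix]
  have hr0 : 0 ≤ r := sq_nonneg _
  have hr1 : r < 1 := by rw [hr]; nlinarith
  have htend : Tendsto e atTop (𝓝 L) := by
    have h0 : Tendsto (fun t => r ^ t) atTop (𝓝 0) :=
      tendsto_pow_atTop_nhds_zero_of_lt_one hr0 hr1
    have h1 : Tendsto (fun t => L + r ^ t * (e 0 - L)) atTop (𝓝 (L + 0 * (e 0 - L))) :=
      tendsto_const_nhds.add (h0.mul_const _)
    rw [zero_mul, add_zero] at h1
    exact h1.congr fun t => (hclosed t).symm
  refine ⟨htend, ?_, ?_⟩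
  · -- second moment with Aind
    have heq : ∀ t, ∫ ω, (x t ω - Aind ω) ^ 2 ∂μ = e t + σ2 := by
      intro t
      have hfL2 : MemLp (fun ω => x t ω - abar) 2 μ := (hxL2 t).sub (memLp_const abar)
      have hgL2 : MemLp (fun ω => abar - Aind ω) 2 μ := (memLp_const abar).sub hAindL2
      have hind : IndepFun (fun ω => x t ω - abar) (fun ω => abar - Aind ω) μ := by
        have hφ : Measurable (fun y : ℝ => y - abar) := measurable_id.sub measurable_const
        have hψ : Measurable (fun y : ℝ => abar - y) := measurable_const.sub measurable_id
        exact (hAindep t).comp hφ hψ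
      have key := expand_sq (μ := μ) (fun ω => x t ω - abar) (fun ω => abar - Aind ω)
        hind hfL2 hgL2
      have hpt : ∀ ω, (x t ω - Aind ω) ^ 2 =
          ((fun ω => x t ω - abar) ω + (fun ω => abar - Aind ω) ω) ^ 2 := by
        intro ω; ring
      have hg0 : ∫ ω, (abar - Aind ω) ∂μ = 0 := by
        rw [integral_sub (integrable_const abar) (hAindL2.integrable one_le_two),
          integral_const, hAindmean]
        simp
      have hgsq : ∫ ω, (abar - Aind ω) ^ 2 ∂μ = σ2 := by
        have : ∀ ω, (abar - Aind ω) ^ 2 = (Aind ω - abar) ^ 2 := by intro ω; ring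
        simp_rw [this]; exact hAindvar
      calc ∫ ω, (x t ω - Aind ω) ^ 2 ∂μ
          = ∫ ω, ((fun ω => x t ω - abar) ω + (fun ω => abar - Aind ω) ω) ^ 2 ∂μ :=
            integral_congr_ae (ae_of_all _ hpt)
        _ = e t + σ2 := by rw [key, hg0, hgsq]; simp [he]
    have h1 : Tendsto (fun t => e t + σ2) atTop (𝓝 (L + σ2)) :=
      htend.add tendsto_const_nhds
    have hLσ : L + σ2 = 2 * σ2 / (2 - η) := by rw [hL]; field_simp; ring
    rw [hLσ] at h1
    exact h1.congr fun t => (heq t).symm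
  · rw [hL, div_div_div_cancel_right₀ h2η]
    rw [mul_comm 2 σ2, mul_comm η σ2, mul_div_mul_left _ _ (ne_of_gt hσ2)]
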